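/- Combined capacity theorem: Let $\xi^1,\dots,\xi^M \in \{-1,+1\}^N$ with pairwise Hamming distance at least $\tau N$, $0 < \rho < \tau/2$, and $M \le \exp(2N(\tau-2\rho))\frac{1-e^{-2}}{2e^2}$. Define energy $E(\xi) = -\sum_{\mu=1}^M \exp(\xi^\top\xi^\mu)$. Then for every $l$, every $\widehat{\xi}$ with $d_H(\widehat{\xi},\xi^l) \le \rho N$, and every coordinate $i$: $E(\mathrm{neg}(\widehat{\xi},i)) > E(\widehat{\xi})$ if $\widehat{\xi}_i = \xi^l_i$, and $E(\mathrm{neg}(\widehat{\xi},i)) < E(\widehat{\xi})$ if $\widehat{\xi}_i = -\xi^l_i$. -/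

import Mathlib

/-- Combined capacity theorem: with memories pairwise `τN`-separated, `0 < ρ < τ/2`
and `M ≤ exp(2N(τ-2ρ)) (1-e⁻²)/(2e²)`, for the energy `E(ξ) = -∑_μ exp(ξᵀξᵘ)` and any
input in the Hamming ball of radius `ρN` around a memory `ξˡ`: flipping a coordinate that
agrees with `ξˡ` strictly increases the energy, while flipping a coordinate that disagrees
strictly decreases it. -/
theorem capacity_combined (N M : ℕ) (τ ρ : ℝ) (hτ : 0 < τ) (hρ : 0 < ρ) (hρτ : ρ < τ / 2)
    (ξ : Fin M → Fin N → ℝ) (hξ : ∀ μ j, ξ μ j = 1 ∨ ξ μ j = -1)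
    (hsep : ∀ μ ν, μ ≠ ν →
      τ * N ≤ ((Finset.univ.filter fun j => ξ μ j ≠ ξ ν j).card : ℝ))
    (hM : (M : ℝ) ≤ Real.exp (2 * N * (τ - 2 * ρ)) * ((1 - Real.exp (-2)) / (2 * Real.exp 2)))
    (E : (Fin N → ℝ) → ℝ) (hE : ∀ η, E η = -∑ μ, Real.exp (∑ j, η j * ξ μ j)) :
    ∀ l : Fin M, ∀ ξh : Fin N → ℝ, (∀ j, ξh j = 1 ∨ ξh j = -1) →
      ((Finset.univ.filter fun j => ξh j ≠ ξ l j).card : ℝ) ≤ ρ * N →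
      ∀ i : Fin N,
        (ξh i = ξ l i → E (Function.update ξh i (-(ξh i))) > E ξh) ∧
        (ξh i = -(ξ l i) → E (Function.update ξh i (-(ξh i))) < E ξh) := by
  intro l ξh hξh hball i
  classical
  set e2 : ℝ := Real.exp 2 with he2
  have he2one : (1:ℝ) < e2 := by
    rw [he2, show (1:ℝ) = Real.exp 0 by simp]
    exact Real.exp_lt_exp.mpr (by norm_num)
  have hinv : Real.exp (-2) * e2 = 1 := by
    rw [he2, ← Real.exp_add]; norm_num
  have hPpos : (0:ℝ) < 1 - Real.exp (-2) := by
    have : Real.exp (-2) < 1 := Real.exp_lt_one_iff.mpr (by norm_num)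
    linarith
  have hPlt : (1:ℝ) - Real.exp (-2) < 1 := by
    have := Real.exp_pos (-2); linarith
  -- Q = e2 - 1 = e2 * P
  have hQ : e2 - 1 = e2 * (1 - Real.exp (-2)) := by
    have := hinv; ring_nf; nlinarith [hinv]
  set S : Fin M → ℝ := fun μ => ∑ j, ξh j * ξ μ j with hSdef
  -- product values
  have hprod1 : ∀ μ (j : Fin N), ξh j = ξ μ j → ξh j * ξ μ j = 1 := by
    intro μ j h
    rcases hξ μ j with h2 | h2 <;> rw [h, h2] <;> norm_num
  have hprod2 : ∀ μ (j : Fin N), ξh j ≠ ξ μ j → ξh j * ξ μ j = -1 := by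
    intro μ j h
    rcases hξh j with h1 | h1 <;> rcases hξ μ j with h2 | h2 <;>
      first
      | (exact absurd (h1.trans h2.symm) h)
      | (rw [h1, h2]; norm_num)
  -- dot product formula
  have hdot : ∀ μ, S μ = (N:ℝ) - 2 * ((Finset.univ.filter fun j => ξh j ≠ ξ μ j).card : ℝ) := by
    intro μ
    have hsplit := Finset.sum_filter_add_sum_filter_not Finset.univ
      (fun j => ξh j ≠ ξ μ j) (fun j => ξh j * ξ μ j)
    have h1 : ∑ j ∈ Finset.univ.filter (fun j => ξh j ≠ ξ μ j), ξh j * ξ μ j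
        = -((Finset.univ.filter fun j => ξh j ≠ ξ μ j).card : ℝ) := by
      rw [Finset.sum_congr rfl (fun j hj => hprod2 μ j (Finset.mem_filter.mp hj).2)]
      simp [Finset.sum_const]
    have h2 : ∑ j ∈ Finset.univ.filter (fun j => ¬ ξh j ≠ ξ μ j), ξh j * ξ μ j
        = ((Finset.univ.filter fun j => ¬ ξh j ≠ ξ μ j).card : ℝ) := by
      rw [Finset.sum_congr rfl (fun j hj => hprod1 μ j
        (not_not.mp (Finset.mem_filter.mp hj).2))]
      simp [Finset.sum_const]
    have hcard := Finset.card_filter_add_card_filter_not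
      (s := (Finset.univ : Finset (Fin N))) (p := fun j => ξh j ≠ ξ μ j)
    simp only [Finset.card_univ, Fintype.card_fin] at hcard
    have hcardR : ((Finset.univ.filter fun j => ξh j ≠ ξ μ j).card : ℝ)
        + ((Finset.univ.filter fun j => ¬ ξh j ≠ ξ μ j).card : ℝ) = (N:ℝ) := by
      exact_mod_cast hcard
    have : S μ = ∑ j ∈ Finset.univ.filter (fun j => ξh j ≠ ξ μ j), ξh j * ξ μ j
        + ∑ j ∈ Finset.univ.filter (fun j => ¬ ξh j ≠ ξ μ j), ξh j * ξ μ j := by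
      rw [hsplit]
    rw [this, h1, h2]; linarith
  -- bound on S l
  have hSl : (N:ℝ) - 2 * (ρ * N) ≤ S l := by
    rw [hdot l]; linarith
  -- bound on S μ for μ ≠ l (triangle inequality)
  have hSmu : ∀ μ, μ ≠ l → S μ ≤ (N:ℝ) - 2 * (τ * N - ρ * N) := by
    intro μ hμ
    have h1 := hsep μ l hμ
    have hsub : (Finset.univ.filter fun j => ξ μ j ≠ ξ l j)
        ⊆ (Finset.univ.filter fun j => ξh j ≠ ξ μ j)
          ∪ (Finset.univ.filter fun j => ξh j ≠ ξ l j) := by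
      intro j hj
      simp only [Finset.mem_filter, Finset.mem_union, Finset.mem_univ, true_and] at hj ⊢
      by_contra hc
      push_neg at hc
      exact hj (hc.1 ▸ hc.2)
    have h2 := Finset.card_le_card hsub
    have h3 := Finset.card_union_le (Finset.univ.filter fun j => ξh j ≠ ξ μ j)
      (Finset.univ.filter fun j => ξh j ≠ ξ l j)
    have h4 : τ * N ≤ ((Finset.univ.filter fun j => ξh j ≠ ξ μ j).card : ℝ)
        + ((Finset.univ.filter fun j => ξh j ≠ ξ l j).card : ℝ) := by
      have := h2.trans h3
      calc τ * N ≤ ((Finset.univ.filter fun j => ξ μ j ≠ ξ l j).card : ℝ) := h1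
        _ ≤ _ := by exact_mod_cast this
    rw [hdot μ]
    linarith
  -- sum after flipping coordinate i
  have hupd : ∀ μ, (∑ j, Function.update ξh i (-(ξh i)) j * ξ μ j)
      = S μ - 2 * (ξh i * ξ μ i) := by
    intro μ
    have hpt : ∀ j, Function.update ξh i (-(ξh i)) j * ξ μ j
        = ξh j * ξ μ j - (if j = i then 2 * (ξh i * ξ μ i) else 0) := by
      intro j
      rcases eq_or_ne j i with h | h
      · subst h; simp [Function.update_self]; ring
      · simp [Function.update_of_ne h, h]
    rw [Finset.sum_congr rfl (fun j _ => hpt j), Finset.sum_sub_distrib]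
    simp [hSdef]
  -- the per-memory energy change
  set t : Fin M → ℝ := fun μ => Real.exp (S μ) - Real.exp (S μ - 2 * (ξh i * ξ μ i)) with htdef
  have hEdiff : E (Function.update ξh i (-(ξh i))) - E ξh = ∑ μ, t μ := by
    rw [hE, hE]
    rw [Finset.sum_congr rfl (fun μ _ => by rw [hupd μ])]
    simp only [htdef]
    rw [Finset.sum_sub_distrib]
    simp only [hSdef]
    ring
  have ht1 : ∀ μ, ξh i = ξ μ i → t μ = Real.exp (S μ) * (1 - Real.exp (-2)) := by
    intro μ h
    simp only [htdef]
    rw [hprod1 μ i h, show S μ - 2 * 1 = S μ + (-2) by ring, Real.exp_add]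
    ring
  have ht2 : ∀ μ, ξh i ≠ ξ μ i → t μ = -(Real.exp (S μ) * (e2 - 1)) := by
    intro μ h
    simp only [htdef]
    rw [hprod2 μ i h, show S μ - 2 * (-1) = S μ + 2 by ring, Real.exp_add, he2]
    ring
  have habs : ∀ μ, |t μ| ≤ Real.exp (S μ) * (e2 - 1) := by
    intro μ
    by_cases h : ξh i = ξ μ i
    · rw [ht1 μ h, abs_of_nonneg (mul_nonneg (Real.exp_pos _).le hPpos.le)]
      have h0 : 0 < Real.exp (S μ) * (1 - Real.exp (-2)) := mul_pos (Real.exp_pos _) hPpos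
      rw [hQ]
      nlinarith [h0, he2one]
    · rw [ht2 μ h, abs_neg, abs_of_nonneg (mul_nonneg (Real.exp_pos _).le (by linarith))]
  -- key bound on the interference sum
  have hkey : ∑ μ ∈ Finset.univ.erase l, |t μ| < Real.exp (S l) * (1 - Real.exp (-2)) := by
    have hB : ∀ μ ∈ Finset.univ.erase l,
        |t μ| ≤ Real.exp ((N:ℝ) - 2 * (τ * N - ρ * N)) * (e2 - 1) := by
      intro μ hμ
      have hμl : μ ≠ l := (Finset.mem_erase.mp hμ).1
      refine (habs μ).trans ?_
      have hexp : Real.exp (S μ) ≤ Real.exp ((N:ℝ) - 2 * (τ * N - ρ * N)) :=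
        Real.exp_le_exp.mpr (hSmu μ hμl)
      exact mul_le_mul_of_nonneg_right hexp (by linarith)
    have hsum : ∑ μ ∈ Finset.univ.erase l, |t μ|
        ≤ (M:ℝ) * (Real.exp ((N:ℝ) - 2 * (τ * N - ρ * N)) * (e2 - 1)) := by
      calc ∑ μ ∈ Finset.univ.erase l, |t μ|
          ≤ ∑ _μ ∈ Finset.univ.erase l, Real.exp ((N:ℝ) - 2 * (τ * N - ρ * N)) * (e2 - 1) :=
            Finset.sum_le_sum hB
        _ = ((Finset.univ.erase l).card : ℝ) * (Real.exp ((N:ℝ) - 2 * (τ * N - ρ * N)) * (e2 - 1)) := by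
            simp [Finset.sum_const, mul_comm]
        _ ≤ (M:ℝ) * (Real.exp ((N:ℝ) - 2 * (τ * N - ρ * N)) * (e2 - 1)) := by
            have hc : ((Finset.univ.erase l).card : ℝ) ≤ (M:ℝ) := by
              have := Finset.card_erase_le (a := l) (s := (Finset.univ : Finset (Fin M)))
              have h2 : (Finset.univ : Finset (Fin M)).card = M := by simp
              exact_mod_cast this.trans_eq h2
            have hpos : (0:ℝ) ≤ Real.exp ((N:ℝ) - 2 * (τ * N - ρ * N)) * (e2 - 1) :=
              mul_nonneg (Real.exp_pos _).le (by linarith)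
            exact mul_le_mul_of_nonneg_right hc hpos
    -- arithmetic
    have hmul : Real.exp (2 * N * (τ - 2 * ρ)) * Real.exp ((N:ℝ) - 2 * (τ * N - ρ * N))
        = Real.exp ((N:ℝ) - 2 * (ρ * N)) := by
      rw [← Real.exp_add]; ring_nf
    set P : ℝ := 1 - Real.exp (-2) with hP
    set A : ℝ := Real.exp ((N:ℝ) - 2 * (ρ * N)) with hA
    set B : ℝ := Real.exp ((N:ℝ) - 2 * (τ * N - ρ * N)) with hB2
    have hAB : Real.exp (2 * N * (τ - 2 * ρ)) * B = A := hmul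
    have hstep : (M:ℝ) * (B * (e2 - 1)) < A * P := by
      have h1 : (M:ℝ) * (B * (e2 - 1)) ≤
          (Real.exp (2 * N * (τ - 2 * ρ)) * (P / (2 * e2))) * (B * (e2 - 1)) := by
        have hnn : (0:ℝ) ≤ B * (e2 - 1) :=
          mul_nonneg (Real.exp_pos _).le (by linarith)
        exact mul_le_mul_of_nonneg_right hM hnn
      have h2 : (Real.exp (2 * N * (τ - 2 * ρ)) * (P / (2 * e2))) * (B * (e2 - 1))
          = A * (P * P / 2) := by
        have he2ne : e2 ≠ 0 := by positivity
        have hre : (Real.exp (2 * N * (τ - 2 * ρ)) * (P / (2 * e2))) * (B * (e2 - 1))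
            = (Real.exp (2 * N * (τ - 2 * ρ)) * B) * ((P / (2 * e2)) * (e2 * P)) := by
          rw [hQ]; ring
        have hx : (P / (2 * e2)) * (e2 * P) = P * P / 2 := by
          field_simp
        rw [hre, hAB, hx]
      have h3 : A * (P * P / 2) < A * P := by
        have hApos : 0 < A := Real.exp_pos _
        have hap : 0 < A * P := mul_pos hApos hPpos
        nlinarith [mul_pos hap (show (0:ℝ) < 1 - P / 2 by linarith)]
      exact (h1.trans (le_of_eq h2)).trans_lt h3
    have hlast : A * P ≤ Real.exp (S l) * P :=
      mul_le_mul_of_nonneg_right (Real.exp_le_exp.mpr hSl) hPpos.le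
    calc ∑ μ ∈ Finset.univ.erase l, |t μ| ≤ (M:ℝ) * (B * (e2 - 1)) := hsum
      _ < A * P := hstep
      _ ≤ Real.exp (S l) * P := hlast
  -- split the total sum
  have hsplit : ∑ μ, t μ = ∑ μ ∈ Finset.univ.erase l, t μ + t l := by
    rw [Finset.sum_erase_add _ _ (Finset.mem_univ l)]
  have herase_lb : -(∑ μ ∈ Finset.univ.erase l, |t μ|) ≤ ∑ μ ∈ Finset.univ.erase l, t μ := by
    have := Finset.sum_le_sum (fun μ (_ : μ ∈ Finset.univ.erase l) => neg_abs_le (t μ))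
    simpa [Finset.sum_neg_distrib] using this
  have herase_ub : ∑ μ ∈ Finset.univ.erase l, t μ ≤ ∑ μ ∈ Finset.univ.erase l, |t μ| :=
    Finset.sum_le_sum (fun μ _ => le_abs_self (t μ))
  constructor
  · intro hagree
    have htl : t l = Real.exp (S l) * (1 - Real.exp (-2)) := ht1 l hagree
    have : 0 < ∑ μ, t μ := by
      rw [hsplit, htl]; linarith
    rw [gt_iff_lt, ← sub_pos]
    linarith [hEdiff, this]
  · intro hdis
    have hne : ξh i ≠ ξ l i := by
      rcases hξ l i with h | h <;> rw [h] at hdis ⊢ <;> rw [hdis] <;> norm_num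
    have htl : t l = -(Real.exp (S l) * (e2 - 1)) := ht2 l hne
    have hPQ : Real.exp (S l) * (1 - Real.exp (-2)) ≤ Real.exp (S l) * (e2 - 1) := by
      have := Real.exp_pos (S l)
      nlinarith [hQ, hPpos, he2one]
    have : ∑ μ, t μ < 0 := by
      rw [hsplit, htl]; linarith [hkey]
    linarith [hEdiff, this]
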